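/- Let N ≥ 1. There exists a constant C > 0, depending only on N, with the following property. Let H be a complex Hilbert space, 𝒜 = B(H), M ≥ 0, T > 0, and let Φ = (Φᵗ_α)_{α ∈ {1,…,N}, t ≥ 0} be a family of elements of 𝒜 such that Φᵗ_α·Φˢ_β = −Φˢ_β·Φᵗ_α for all α, β, s, t (in particular (Φᵗ_α)² = 0, the Pauli exclusion principle), ‖Φᵗ_α‖ ≤ M for all α, t, and ‖Φᵗ_α − Φˢ_α‖ ≤ M·|t − s|^{1/2} for all α, s, t. Then for every n ≥ 4N, all times t₁, …, t_n ∈ [0, T] and all indices α₁, …, α_n ∈ {1, …, N}: ‖Φ^{t₁}_{α₁} · Φ^{t₂}_{α₂} ⋯ Φ^{t_n}_{α_n}‖_𝒜 ≤ C^{n+1} · T^{n/8} · Mⁿ / (n!)^{1/8}. -/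

import Mathlib

universe u

section Helpers

variable {A : Type*} [NormedRing A]

private lemma anticomm_prod_sign : ∀ {l l' : List A}, l.Perm l' →
    (∀ x ∈ l, ∀ y ∈ l, x * y = -(y * x)) →
    l.prod = l'.prod ∨ l.prod = -l'.prod := by
  intro l l' h
  induction h with
  | nil => exact fun _ => Or.inl rfl
  | cons x h ih =>
    intro hac
    rcases ih (fun a ha b hb => hac a (List.mem_cons_of_mem _ ha) b (List.mem_cons_of_mem _ hb))
      with h1 | h1
    · exact Or.inl (by rw [List.prod_cons, List.prod_cons, h1])
    · exact Or.inr (by rw [List.prod_cons, List.prod_cons, h1, mul_neg])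
  | swap x y l =>
    intro hac
    have h := hac y (by simp) x (by simp)
    exact Or.inr (by rw [List.prod_cons, List.prod_cons, List.prod_cons, List.prod_cons,
      ← mul_assoc, ← mul_assoc, h, neg_mul])
  | trans h1 h2 ih1 ih2 =>
    intro hac
    have hac2 := fun x hx y hy => hac x (h1.mem_iff.mpr hx) y (h1.mem_iff.mpr hy)
    rcases ih1 hac with ha | ha <;> rcases ih2 hac2 with hb | hb
    · exact Or.inl (ha.trans hb)
    · exact Or.inr (ha.trans hb)
    · exact Or.inr (by rw [ha, hb])
    · exact Or.inl (by rw [ha, hb, neg_neg])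

private lemma anticomm_norm_prod_eq {l l' : List A} (h : l.Perm l')
    (hac : ∀ x ∈ l, ∀ y ∈ l, x * y = -(y * x)) : ‖l.prod‖ = ‖l'.prod‖ := by
  rcases anticomm_prod_sign h hac with h1 | h1 <;> rw [h1]
  exact norm_neg _

private lemma norm_prod_le_pow' {ι : Type*} (f : ι → A) (M : ℝ) (h1 : ‖(1:A)‖ ≤ 1) (hM : 0 ≤ M) :
    ∀ l : List ι, (∀ i ∈ l, ‖f i‖ ≤ M) → ‖(l.map f).prod‖ ≤ M ^ l.length := by
  intro l
  induction l with
  | nil => intro _; simpa using h1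
  | cons a l ih =>
    intro hl
    rw [List.map_cons, List.prod_cons, List.length_cons, pow_succ']
    exact (norm_mul_le _ _).trans (mul_le_mul (hl a (by simp))
      (ih fun i hi => hl i (List.mem_cons_of_mem _ hi)) (norm_nonneg _) hM)

private lemma pair_extraction {ι : Type*} [DecidableEq ι] (f : ι → A) (M : ℝ) (w : ι × ι → ℝ)
    (h1 : ‖(1:A)‖ ≤ 1) (hM : 0 ≤ M) :
    ∀ (P : List (ι × ι)) (l : List ι), l.Nodup →
    (∀ i ∈ l, ‖f i‖ ≤ M) →
    (∀ x ∈ l, ∀ y ∈ l, f x * f y = -(f y * f x)) →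
    (∀ p ∈ P, p.1 ∈ l ∧ p.2 ∈ l ∧ p.1 ≠ p.2 ∧ ‖f p.1 * f p.2‖ ≤ M ^ 2 * w p ∧ 0 ≤ w p) →
    P.Pairwise (fun p r => p.1 ≠ r.1 ∧ p.1 ≠ r.2 ∧ p.2 ≠ r.1 ∧ p.2 ≠ r.2) →
    ‖(l.map f).prod‖ ≤ M ^ l.length * (P.map w).prod := by
  intro P
  induction P with
  | nil =>
    intro l hnd hbd hac _ _
    simpa using norm_prod_le_pow' f M h1 hM l hbd
  | cons p P ih =>
    intro l hnd hbd hac hP hpw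
    obtain ⟨hi, hj, hij, hwle, hw0⟩ := hP p List.mem_cons_self
    have hpw' := List.pairwise_cons.mp hpw
    set l' : List ι := (l.erase p.1).erase p.2 with hl'
    have hjl : p.2 ∈ l.erase p.1 := (List.mem_erase_of_ne hij.symm).mpr hj
    have hperm : l.Perm (p.1 :: p.2 :: l') :=
      (List.perm_cons_erase hi).trans (((List.perm_cons_erase hjl)).cons p.1)
    have hmem' : ∀ x ∈ l', x ∈ l := fun x hx =>
      List.mem_of_mem_erase (List.mem_of_mem_erase hx)
    have hacm : ∀ x ∈ l.map f, ∀ y ∈ l.map f, x * y = -(y * x) := by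
      intro x hx y hy
      obtain ⟨a, ha, rfl⟩ := List.mem_map.mp hx
      obtain ⟨b, hb, rfl⟩ := List.mem_map.mp hy
      exact hac a ha b hb
    have hnorm : ‖(l.map f).prod‖ = ‖((p.1 :: p.2 :: l').map f).prod‖ :=
      anticomm_norm_prod_eq (hperm.map f) hacm
    have hlen : l.length = l'.length + 2 := by
      have := hperm.length_eq; simpa using this
    have hrest : ‖(l'.map f).prod‖ ≤ M ^ l'.length * (P.map w).prod := by
      refine ih l' ((hnd.erase _).erase _) (fun i hi' => hbd i (hmem' i hi'))
        (fun x hx y hy => hac x (hmem' x hx) y (hmem' y hy)) ?_ hpw'.2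
      intro r hr
      obtain ⟨hr1, hr2, hr3, hr4, hr5⟩ := hP r (List.mem_cons_of_mem _ hr)
      obtain ⟨hd1, hd2, hd3, hd4⟩ := hpw'.1 r hr
      refine ⟨?_, ?_, hr3, hr4, hr5⟩
      · exact (List.mem_erase_of_ne hd3.symm).mpr ((List.mem_erase_of_ne hd1.symm).mpr hr1)
      · exact (List.mem_erase_of_ne hd4.symm).mpr ((List.mem_erase_of_ne hd2.symm).mpr hr2)
    have hprodw0 : (0:ℝ) ≤ (P.map w).prod := by
      apply List.prod_nonneg
      intro x hx
      obtain ⟨r, hr, rfl⟩ := List.mem_map.mp hx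
      exact (hP r (List.mem_cons_of_mem _ hr)).2.2.2.2
    calc ‖(l.map f).prod‖ = ‖(f p.1 * f p.2) * (l'.map f).prod‖ := by
          rw [hnorm, List.map_cons, List.map_cons, List.prod_cons, List.prod_cons, mul_assoc]
      _ ≤ ‖f p.1 * f p.2‖ * ‖(l'.map f).prod‖ := norm_mul_le _ _
      _ ≤ (M ^ 2 * w p) * (M ^ l'.length * (P.map w).prod) := by
          apply mul_le_mul hwle hrest (norm_nonneg _)
          positivity
      _ = M ^ l.length * ((p :: P).map w).prod := by
          rw [hlen, List.map_cons, List.prod_cons, pow_add]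
          ring

private lemma pigeon {n N q : ℕ} (hq : 0 < q) {T : ℝ} (hT : 0 < T)
    (t : Fin n → ℝ) (α : Fin n → Fin N) (ht : ∀ i, t i ∈ Set.Icc 0 T)
    (S : Finset (Fin n)) (hS : N * q < S.card) :
    ∃ i ∈ S, ∃ j ∈ S, i ≠ j ∧ α i = α j ∧ |t i - t j| ≤ T / q := by
  classical
  have hqR : (0:ℝ) < q := by exact_mod_cast hq
  set b : Fin n → ℕ := fun i => min (⌊t i * q / T⌋₊) (q - 1) with hb
  have hblt : ∀ i, b i < q := fun i => lt_of_le_of_lt (Nat.min_le_right _ _) (by omega)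
  set g : Fin n → Fin N × Fin q := fun i => (α i, ⟨b i, hblt i⟩) with hg
  have hcard : (Finset.univ : Finset (Fin N × Fin q)).card < S.card := by
    simpa [Finset.card_univ] using hS
  obtain ⟨i, hi, j, hj, hne, hgeq⟩ :=
    Finset.exists_ne_map_eq_of_card_lt_of_maps_to hcard (fun a _ => Finset.mem_univ (g a))
  have hα : α i = α j := congrArg Prod.fst hgeq
  have hbij : b i = b j := congrArg (fun p => (p.2 : ℕ)) hgeq
  have key : ∀ k, (b k : ℝ) * (T / q) ≤ t k ∧ t k ≤ ((b k : ℝ) + 1) * (T / q) := by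
    intro k
    obtain ⟨ht0, htT⟩ := ht k
    have hbk : b k = min (⌊t k * q / T⌋₊) (q - 1) := rfl
    have hx0 : (0:ℝ) ≤ t k * q / T := by positivity
    have hxq : t k * q / T ≤ q := by
      rw [div_le_iff₀ hT]
      nlinarith
    have htk : t k = (t k * q / T) * (T / q) := by field_simp
    have hble : (b k : ℝ) ≤ t k * q / T := by
      have h1 : (b k : ℝ) ≤ (⌊t k * q / T⌋₊ : ℝ) := by
        rw [hbk]; exact_mod_cast Nat.min_le_left _ _
      exact h1.trans (Nat.floor_le hx0)
    have hxle : t k * q / T ≤ (b k : ℝ) + 1 := by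
      rcases le_or_gt (⌊t k * q / T⌋₊) (q - 1) with hc | hc
      · have h1 : b k = ⌊t k * q / T⌋₊ := by rw [hbk]; exact min_eq_left hc
        rw [h1]
        exact (Nat.lt_floor_add_one _).le
      · have h1 : b k = q - 1 := by rw [hbk]; exact min_eq_right (by omega)
        have h2 : ((q - 1 : ℕ) : ℝ) = (q : ℝ) - 1 := by
          have : 1 ≤ q := hq
          push_cast [this]
          ring
        rw [h1, h2]
        linarith
    constructor
    · calc (b k : ℝ) * (T / q) ≤ (t k * q / T) * (T / q) :=
            mul_le_mul_of_nonneg_right hble (by positivity)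
        _ = t k := htk.symm
    · calc t k = (t k * q / T) * (T / q) := htk
        _ ≤ ((b k : ℝ) + 1) * (T / q) := mul_le_mul_of_nonneg_right hxle (by positivity)
  refine ⟨i, hi, j, hj, hne, hα, ?_⟩
  obtain ⟨h1, h2⟩ := key i
  obtain ⟨h3, h4⟩ := key j
  rw [hbij] at h1 h2
  rw [abs_sub_le_iff]
  constructor <;> nlinarith

private lemma greedy {n N q : ℕ} (hq : 0 < q) {T : ℝ} (hT : 0 < T)
    (t : Fin n → ℝ) (α : Fin n → Fin N) (ht : ∀ i, t i ∈ Set.Icc 0 T) :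
    ∀ (K : ℕ) (S : Finset (Fin n)), N * q + 2 * K ≤ S.card + 1 →
    ∃ P : List (Fin n × Fin n), P.length = K ∧
      (∀ p ∈ P, p.1 ∈ S ∧ p.2 ∈ S ∧ p.1 ≠ p.2 ∧ α p.1 = α p.2 ∧ |t p.1 - t p.2| ≤ T / q) ∧
      P.Pairwise (fun p r => p.1 ≠ r.1 ∧ p.1 ≠ r.2 ∧ p.2 ≠ r.1 ∧ p.2 ≠ r.2) := by
  intro K
  induction K with
  | zero => exact fun S _ => ⟨[], rfl, by simp, by simp⟩
  | succ K ih =>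
    intro S hS
    have hNq : N * q < S.card := by omega
    obtain ⟨i, hi, j, hj, hij, hαij, hdist⟩ := pigeon hq hT t α ht S hNq
    have hjS : j ∈ S.erase i := Finset.mem_erase.mpr ⟨Ne.symm hij, hj⟩
    obtain ⟨P, hlen, hmem, hpw⟩ := ih ((S.erase i).erase j) (by
      have e1 := Finset.card_erase_of_mem hjS
      have e2 := Finset.card_erase_of_mem hi
      have e3 : 0 < S.card := by omega
      omega)
    refine ⟨(i, j) :: P, by simp [hlen], ?_, ?_⟩
    · intro p hp
      rcases List.mem_cons.mp hp with rfl | hp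
      · exact ⟨hi, hj, hij, hαij, hdist⟩
      · obtain ⟨h1, h2, h3, h4, h5⟩ := hmem p hp
        exact ⟨Finset.mem_of_mem_erase (Finset.mem_of_mem_erase h1),
          Finset.mem_of_mem_erase (Finset.mem_of_mem_erase h2), h3, h4, h5⟩
    · refine List.pairwise_cons.mpr ⟨?_, hpw⟩
      intro r hr
      obtain ⟨h1, h2, _, _, _⟩ := hmem r hr
      exact ⟨Ne.symm (Finset.ne_of_mem_erase (Finset.mem_of_mem_erase h1)),
        Ne.symm (Finset.ne_of_mem_erase (Finset.mem_of_mem_erase h2)),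
        Ne.symm (Finset.ne_of_mem_erase h1),
        Ne.symm (Finset.ne_of_mem_erase h2)⟩

private lemma sq_eq_zero' {B : Type*} [Ring B] [Module ℂ B] (a : B) (h : a * a = -(a * a)) :
    a * a = 0 := by
  have h2 : (2:ℂ) • (a * a) = 0 := by
    rw [two_smul]
    rw [eq_neg_iff_add_eq_zero] at h
    exact h
  calc a * a = (2:ℂ)⁻¹ • ((2:ℂ) • (a * a)) := by rw [smul_smul]; norm_num
    _ = 0 := by rw [h2, smul_zero]

private lemma list_prod_le_pow (c : ℝ) (hc : 0 ≤ c) :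
    ∀ l : List ℝ, (∀ x ∈ l, 0 ≤ x ∧ x ≤ c) → l.prod ≤ c ^ l.length := by
  intro l
  induction l with
  | nil => simp
  | cons a l ih =>
    intro h
    rw [List.prod_cons, List.length_cons, pow_succ']
    obtain ⟨ha0, hac⟩ := h a (by simp)
    exact mul_le_mul hac (ih fun x hx => h x (List.mem_cons_of_mem _ hx))
      (List.prod_nonneg fun x hx => (h x (List.mem_cons_of_mem _ hx)).1) hc

private lemma arith (N n K : ℕ) (T : ℝ) (hT : 0 < T) (hN : 1 ≤ N) (hn : 4 * N ≤ n)
    (h1 : n ≤ 4 * K + 3) (h2 : 4 * K ≤ n + 3)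
    (hTpow : T ^ ((K : ℝ) / 2) ≤ T ^ ((n : ℝ) / 8)) :
    (Real.sqrt (8 * N * T / n)) ^ K ≤
      (16 * N : ℝ) ^ (n + 1) * T ^ ((n : ℝ) / 8) / ((n.factorial : ℝ)) ^ ((1 : ℝ) / 8) := by
  have hn4 : 4 ≤ n := by omega
  have hnR : (0:ℝ) < n := by exact_mod_cast (by omega : 0 < n)
  have hNR : (1:ℝ) ≤ N := by exact_mod_cast hN
  have hB : (0:ℝ) < 8 * N * T / n := by positivity
  have hfpos : (0:ℝ) < ((n.factorial : ℝ)) ^ ((1:ℝ)/8) := by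
    have : (0:ℝ) < (n.factorial : ℝ) := by exact_mod_cast n.factorial_pos
    positivity
  rw [le_div_iff₀ hfpos]
  have hLHS : (Real.sqrt (8 * N * T / n)) ^ K
      = (8 * (N:ℝ) / n) ^ ((K:ℝ)/2) * T ^ ((K:ℝ)/2) := by
    rw [Real.sqrt_eq_rpow, ← Real.rpow_natCast ((8 * (N:ℝ) * T / n) ^ ((1:ℝ)/2)) K,
      ← Real.rpow_mul hB.le]
    rw [show (8 * (N:ℝ) * T / n) = (8 * N / n) * T by ring]
    rw [Real.mul_rpow (by positivity) hT.le]
    rw [show (1/2 * (K:ℝ)) = (K:ℝ)/2 by ring]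
  rw [hLHS]
  have hfact : ((n.factorial : ℝ)) ^ ((1:ℝ)/8) ≤ (n:ℝ) ^ ((n:ℝ)/8) := by
    have hle : (n.factorial : ℝ) ≤ (n:ℝ) ^ (n:ℕ) := by
      exact_mod_cast Nat.factorial_le_pow n
    calc ((n.factorial : ℝ)) ^ ((1:ℝ)/8) ≤ ((n:ℝ) ^ (n:ℕ)) ^ ((1:ℝ)/8) := by
          apply Real.rpow_le_rpow (by positivity) hle (by norm_num)
      _ = (n:ℝ) ^ ((n:ℝ)/8) := by
          rw [← Real.rpow_natCast (n:ℝ) n, ← Real.rpow_mul hnR.le,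
            show ((n:ℝ) * (1/8)) = (n:ℝ)/8 by ring]
  have hdivsplit : (8 * (N:ℝ) / n) ^ ((K:ℝ)/2)
      = (8 * (N:ℝ)) ^ ((K:ℝ)/2) / (n:ℝ) ^ ((K:ℝ)/2) :=
    Real.div_rpow (by positivity) hnR.le _
  calc (8 * (N:ℝ) / n) ^ ((K:ℝ)/2) * T ^ ((K:ℝ)/2) * ((n.factorial : ℝ)) ^ ((1:ℝ)/8)
      ≤ (8 * (N:ℝ) / n) ^ ((K:ℝ)/2) * T ^ ((n:ℝ)/8) * ((n:ℝ) ^ ((n:ℝ)/8)) := by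
        have h0 : (0:ℝ) ≤ (8 * (N:ℝ) / n) ^ ((K:ℝ)/2) := by positivity
        apply mul_le_mul (mul_le_mul_of_nonneg_left hTpow h0) hfact (by positivity)
        positivity
    _ = (8 * (N:ℝ)) ^ ((K:ℝ)/2) * ((n:ℝ) ^ ((n:ℝ)/8) / (n:ℝ) ^ ((K:ℝ)/2)) * T ^ ((n:ℝ)/8) := by
        rw [hdivsplit]; ring
    _ = (8 * (N:ℝ)) ^ ((K:ℝ)/2) * (n:ℝ) ^ ((n:ℝ)/8 - (K:ℝ)/2) * T ^ ((n:ℝ)/8) := by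
        rw [← Real.rpow_sub hnR]
    _ ≤ (8 * (N:ℝ)) ^ ((n:ℝ)+1) * (n:ℝ) ^ ((1:ℝ)) * T ^ ((n:ℝ)/8) := by
        have hKle : (K:ℝ)/2 ≤ (n:ℝ) + 1 := by
          have : (4 * K : ℝ) ≤ (n:ℝ) + 3 := by exact_mod_cast h2
          linarith
        have hexp : (n:ℝ)/8 - (K:ℝ)/2 ≤ 1 := by
          have : (n:ℝ) ≤ 4 * (K:ℝ) + 3 := by exact_mod_cast h1
          linarith
        have g1 : (8 * (N:ℝ)) ^ ((K:ℝ)/2) ≤ (8 * (N:ℝ)) ^ ((n:ℝ)+1) :=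
          Real.rpow_le_rpow_of_exponent_le (by linarith) hKle
        have g2 : (n:ℝ) ^ ((n:ℝ)/8 - (K:ℝ)/2) ≤ (n:ℝ) ^ ((1:ℝ)) :=
          Real.rpow_le_rpow_of_exponent_le (by exact_mod_cast (by omega : 1 ≤ n)) hexp
        have := mul_le_mul g1 g2 (by positivity) (by positivity)
        exact mul_le_mul_of_nonneg_right this (by positivity)
    _ ≤ (8 * (N:ℝ)) ^ ((n:ℝ)+1) * (2:ℝ) ^ ((n:ℝ)+1) * T ^ ((n:ℝ)/8) := by
        have hn2 : (n:ℝ) ^ ((1:ℝ)) ≤ (2:ℝ) ^ ((n:ℝ)+1) := by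
          rw [Real.rpow_one]
          have ha : (n:ℝ) ≤ 2 ^ n := by exact_mod_cast (Nat.lt_two_pow_self (n := n)).le
          have hb2 : ((2:ℝ)) ^ ((n:ℝ)+1) = 2 ^ (n+1 : ℕ) := by
            rw [← Real.rpow_natCast (2:ℝ) (n+1)]
            push_cast
            ring_nf
          rw [hb2]
          calc (n:ℝ) ≤ 2 ^ n := ha
            _ ≤ 2 ^ (n+1:ℕ) := by
              apply pow_le_pow_right₀ (by norm_num) (by omega)
        apply mul_le_mul_of_nonneg_right _ (by positivity)
        exact mul_le_mul_of_nonneg_left hn2 (by positivity)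
    _ = (16 * (N:ℝ)) ^ (n + 1) * T ^ ((n:ℝ)/8) := by
        rw [← Real.mul_rpow (by positivity) (by norm_num)]
        rw [show (8 * (N:ℝ)) * 2 = 16 * N by ring]
        rw [show ((n:ℝ) + 1) = ((n + 1 : ℕ) : ℝ) by push_cast; ring]
        rw [Real.rpow_natCast]

end Helpers

/-- A family `Φ : [0,∞) → 𝒜^N` is an anticommuting `M`-bounded family if its values pairwise
anticommute (in particular each squares to zero: Pauli exclusion principle), are bounded in
norm by `M` and are `1/2`-Hölder in time with constant `M`. -/
def AnticommFamily {A : Type*} [NormedRing A] {N : ℕ} (M : ℝ) (Φ : ℝ → Fin N → A) : Prop :=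
  (∀ s t : ℝ, 0 ≤ s → 0 ≤ t → ∀ α β : Fin N, Φ t α * Φ s β = -(Φ s β * Φ t α)) ∧
  (∀ t : ℝ, 0 ≤ t → ∀ α : Fin N, ‖Φ t α‖ ≤ M) ∧
  (∀ s t : ℝ, 0 ≤ s → 0 ≤ t → ∀ α : Fin N, ‖Φ t α - Φ s α‖ ≤ M * Real.sqrt |t - s|)

/-- Product estimate exploiting the Pauli exclusion principle: there is a
constant `C > 0` depending only on `N` such that for every anticommuting `M`-bounded family
`Φ` in `B(H)` and every `n ≥ 4N`, times `t₁,…,tₙ ∈ [0,T]` and indices `α₁,…,αₙ`,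
`‖Φ^{t₁}_{α₁} ⋯ Φ^{tₙ}_{αₙ}‖ ≤ C^{n+1} T^{n/8} Mⁿ / (n!)^{1/8}`. -/
theorem stmt_12 (N : ℕ) (hN : 1 ≤ N) :
    ∃ C > (0 : ℝ),
      ∀ (H : Type u) [NormedAddCommGroup H] [InnerProductSpace ℂ H] [CompleteSpace H]
        (M T : ℝ), 0 ≤ M → 0 < T →
        ∀ Φ : ℝ → Fin N → (H →L[ℂ] H), AnticommFamily M Φ →
        ∀ n : ℕ, 4 * N ≤ n →
        ∀ t : Fin n → ℝ, (∀ i, t i ∈ Set.Icc (0 : ℝ) T) →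
        ∀ α : Fin n → Fin N,
          ‖(List.ofFn fun i => Φ (t i) (α i)).prod‖ ≤
            C ^ (n + 1) * T ^ ((n : ℝ) / 8) * M ^ n / ((n.factorial : ℝ)) ^ ((1 : ℝ) / 8) := by
  refine ⟨16 * N, by positivity, ?_⟩
  intro H _ _ _ M T hM hT Φ hΦ n hn t ht α
  classical
  obtain ⟨hanti, hbd, hhol⟩ := hΦ
  set f : Fin n → (H →L[ℂ] H) := fun i => Φ (t i) (α i) with hf
  have hn4 : 4 ≤ n := by omega
  set q : ℕ := n / (4 * N) with hqdef
  have hq1 : 1 ≤ q := (Nat.one_le_div_iff (by omega)).mpr hn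
  have hq8 : n ≤ 8 * N * q := by
    have hmod : n % (4 * N) < 4 * N := Nat.mod_lt _ (by omega)
    have h5 : 4 * N ≤ 4 * N * q := Nat.le_mul_of_pos_right _ hq1
    calc n = 4 * N * q + n % (4 * N) := by
            rw [hqdef]; exact (Nat.div_add_mod n (4 * N)).symm
      _ ≤ 4 * N * q + 4 * N := Nat.add_le_add_left hmod.le _
      _ ≤ 4 * N * q + 4 * N * q := Nat.add_le_add_left h5 _
      _ = 8 * N * q := by ring
  -- choose K
  obtain ⟨K, hK1, hK2, hKT⟩ : ∃ K : ℕ, n ≤ 4 * K + 3 ∧ 4 * K ≤ n + 3 ∧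
      T ^ ((K:ℝ)/2) ≤ T ^ ((n:ℝ)/8) := by
    rcases lt_or_ge T 1 with hT1 | hT1
    · refine ⟨(n + 3) / 4, by omega, by omega, ?_⟩
      apply Real.rpow_le_rpow_of_exponent_ge hT hT1.le
      have h4K : n ≤ 4 * ((n + 3) / 4) := by omega
      have : (n:ℝ) ≤ 4 * (((n + 3) / 4 : ℕ) : ℝ) := by exact_mod_cast h4K
      linarith
    · refine ⟨n / 4, by omega, by omega, Real.rpow_le_rpow_of_exponent_le hT1 ?_⟩
      have h4K : 4 * (n / 4) ≤ n := by omega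
      have : 4 * ((n / 4 : ℕ) : ℝ) ≤ (n:ℝ) := by exact_mod_cast h4K
      linarith
  -- greedy pairs
  obtain ⟨P, hlen, hmem, hpw⟩ := greedy (by omega : 0 < q) hT t α ht K Finset.univ (by
    have h1 : N * q ≤ n / 4 := by
      rw [hqdef, Nat.div_div_eq_div_mul n 4 N |>.symm]
      exact Nat.mul_div_le _ _ |>.trans (le_of_eq rfl)
    simp only [Finset.card_univ, Fintype.card_fin]
    omega)
  -- operator bound via pair extraction
  have h1A : ‖(1 : H →L[ℂ] H)‖ ≤ 1 := ContinuousLinearMap.norm_id_le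
  set w : Fin n × Fin n → ℝ := fun p => Real.sqrt |t p.1 - t p.2| with hw
  have hpairP : ∀ p ∈ P, p.1 ∈ (List.finRange n) ∧ p.2 ∈ (List.finRange n) ∧ p.1 ≠ p.2 ∧
      ‖f p.1 * f p.2‖ ≤ M ^ 2 * w p ∧ 0 ≤ w p := by
    intro p hp
    obtain ⟨_, _, hne, hαp, _⟩ := hmem p hp
    refine ⟨List.mem_finRange _, List.mem_finRange _, hne, ?_, Real.sqrt_nonneg _⟩
    have hsq : f p.1 * f p.1 = 0 :=
      sq_eq_zero' _ (hanti (t p.1) (t p.1) (ht p.1).1 (ht p.1).1 (α p.1) (α p.1))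
    have hre : f p.1 * f p.2 = f p.1 * (f p.2 - f p.1) := by
      rw [mul_sub, hsq, sub_zero]
    rw [hre]
    calc ‖f p.1 * (f p.2 - f p.1)‖ ≤ ‖f p.1‖ * ‖f p.2 - f p.1‖ := norm_mul_le _ _
      _ ≤ M * (M * Real.sqrt |t p.2 - t p.1|) := by
          apply mul_le_mul (hbd (t p.1) (ht p.1).1 (α p.1)) _ (norm_nonneg _) hM
          have : f p.2 = Φ (t p.2) (α p.1) := by rw [hf]; simp only [hαp]
          rw [hf] at *
          simp only at this ⊢
          rw [this]
          exact hhol (t p.1) (t p.2) (ht p.1).1 (ht p.2).1 (α p.1)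
      _ = M ^ 2 * w p := by rw [hw]; simp only [abs_sub_comm (t p.2) (t p.1)]; ring
  have hkey := pair_extraction f M w h1A hM P (List.finRange n) (List.nodup_finRange n)
    (fun i _ => hbd (t i) (ht i).1 (α i))
    (fun x _ y _ => hanti (t y) (t x) (ht y).1 (ht x).1 (α x) (α y))
    hpairP hpw
  rw [List.length_finRange] at hkey
  -- bound the weight product
  have hqR : (0:ℝ) < q := by exact_mod_cast (by omega : 0 < q)
  have hnR : (0:ℝ) < n := by exact_mod_cast (by omega : 0 < n)
  have hTq : T / q ≤ 8 * N * T / n := by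
    rw [div_le_div_iff₀ hqR hnR]
    have h8 : (n:ℝ) ≤ 8 * N * q := by exact_mod_cast hq8
    nlinarith
  have hwprod : (P.map w).prod ≤ (Real.sqrt (8 * N * T / n)) ^ K := by
    rw [← hlen, ← List.length_map (as := P) w]
    apply list_prod_le_pow _ (Real.sqrt_nonneg _)
    intro x hx
    obtain ⟨p, hp, rfl⟩ := List.mem_map.mp hx
    refine ⟨Real.sqrt_nonneg _, ?_⟩
    obtain ⟨_, _, _, _, hd⟩ := hmem p hp
    exact (Real.sqrt_le_sqrt hd).trans (Real.sqrt_le_sqrt hTq)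
  have harith := arith N n K T hT hN hn hK1 hK2 hKT
  -- finish
  rw [List.ofFn_eq_map]
  have hMn : (0:ℝ) ≤ M ^ n := by positivity
  calc ‖((List.finRange n).map f).prod‖ ≤ M ^ n * (P.map w).prod := hkey
    _ ≤ M ^ n * ((Real.sqrt (8 * N * T / n)) ^ K) := mul_le_mul_of_nonneg_left hwprod hMn
    _ ≤ M ^ n * ((16 * N : ℝ) ^ (n + 1) * T ^ ((n:ℝ)/8) / ((n.factorial : ℝ)) ^ ((1:ℝ)/8)) :=
        mul_le_mul_of_nonneg_left harith hMn
    _ = (16 * N : ℝ) ^ (n + 1) * T ^ ((n:ℝ)/8) * M ^ n / ((n.factorial : ℝ)) ^ ((1:ℝ)/8) := by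
        ring
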